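/- Assume additionally that ζ²(a+ib) is real and strictly positive. Then for every fixed j ∈ ℕ there exist constants C_j, W₀ (depending on a, b, ζ, j) such that for all W ≥ W₀, |s_j^hr/|λ_j^hr| − 1| ≤ C_j·W^{−2}, where λ_j^hr = √(π/(W²ζ² + α_hr + (a+ib)/2))·(W²ζ²/(W²ζ² + α_hr + (a+ib)/2))^j are the eigenvalues of K_hr and (s_j^hr)² = √(π²/(W⁴ + 2aA + √((2W⁴ + aA)aA)))·(W⁴/(W⁴ + 2aA + √((2W⁴ + aA)aA)))^j, with A = 2W²Re ζ² + a, are the squared singular values of K_hr. -/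

import Mathlib

open MeasureTheory Complex Real
open scoped ComplexInnerProductSpace

noncomputable section

/-- The Hilbert space `L²(ℝ, ℂ)`. -/
abbrev Hsp : Type := Lp ℂ 2 (volume : Measure ℝ)

/-- `T` is the integral operator on `L²(ℝ)` with kernel `k`. -/
def IsKerOp (k : ℝ → ℝ → ℂ) (T : Hsp →L[ℂ] Hsp) : Prop :=
  ∀ f : Hsp, ∀ᵐ x : ℝ, (T f : ℝ → ℂ) x = ∫ y : ℝ, k x y * (f : ℝ → ℂ) y

/-- The harmonic-oscillator kernel
`K_hr(x,y) = exp(−W²ζ²(x−y)² − ((a+ib)/2)(x²+y²))`. -/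
def kerHr (W : ℝ) (ζ : ℂ) (a b : ℝ) (x y : ℝ) : ℂ :=
  Complex.exp (-(W : ℂ)^2 * ζ^2 * ((x : ℂ) - (y : ℂ))^2
    - (((a : ℂ) + (b : ℂ) * Complex.I) / 2) * ((x : ℂ)^2 + (y : ℂ)^2))

/-- The eigenvalues `λ_j^hr` of the harmonic oscillator (principal square root). -/
def lamHr (W : ℝ) (ζ : ℂ) (a b : ℝ) (αhr : ℂ) (j : ℕ) : ℂ :=
  ((π : ℂ) / ((W : ℂ)^2 * ζ^2 + αhr + ((a : ℂ) + (b : ℂ) * Complex.I) / 2)) ^ (1/2 : ℂ) *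
    (((W : ℂ)^2 * ζ^2) / ((W : ℂ)^2 * ζ^2 + αhr + ((a : ℂ) + (b : ℂ) * Complex.I) / 2)) ^ j

/-- The squared singular values `(s_j^hr)²` of the harmonic oscillator, where
`A = 2W²·Re ζ² + a`. -/
def ssqHr (W a A : ℝ) (j : ℕ) : ℝ :=
  Real.sqrt (π^2 / (W^4 + 2*a*A + Real.sqrt ((2*W^4 + a*A) * (a*A)))) *
    (W^4 / (W^4 + 2*a*A + Real.sqrt ((2*W^4 + a*A) * (a*A)))) ^ j

/-- The (complex) Gaussian `g_α(x) = (2α/π)^{1/4}·exp(−αx²)`, principal branch. -/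
def gaussC (α : ℂ) (x : ℝ) : ℂ :=
  (2 * α / (π : ℂ)) ^ (1/4 : ℂ) * Complex.exp (-α * (x : ℂ)^2)

end

/-- auxiliary: `|u^n - 1| ≤ (2^n - 1)|u-1|` for `0 ≤ u ≤ 2`. -/
lemma aux_pow_sub_one (u : ℝ) (hu0 : 0 ≤ u) (hu2 : u ≤ 2) :
    ∀ n : ℕ, |u^n - 1| ≤ (2^n - 1) * |u - 1| := by
  intro n
  induction n with
  | zero => simp
  | succ n ih =>
    have h1 : u^(n+1) - 1 = u * (u^n - 1) + (u - 1) := by ring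
    calc |u^(n+1) - 1| ≤ |u * (u^n - 1)| + |u - 1| := h1 ▸ abs_add_le _ _
      _ = u * |u^n - 1| + |u - 1| := by rw [abs_mul, _root_.abs_of_nonneg hu0]
      _ ≤ 2 * ((2^n - 1) * |u - 1|) + |u - 1| := by
          have h2 : u * |u^n - 1| ≤ 2 * ((2^n - 1) * |u - 1|) := by
            calc u * |u^n - 1| ≤ 2 * |u^n - 1| :=
                  mul_le_mul_of_nonneg_right hu2 (abs_nonneg _)
              _ ≤ 2 * ((2^n - 1) * |u - 1|) := by linarith [ih]
          linarith
      _ = (2^(n+1) - 1) * |u - 1| := by ring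

set_option maxHeartbeats 2000000 in
/-- if `ζ²(a+ib)` is real and positive, then for each fixed `j`,
`s_j^hr/|λ_j^hr| = 1 + O(W^{−2})`. -/
theorem stmt_9 :
    ∀ (ζ : ℂ) (a b : ℝ), ‖ζ‖ = 1 → 0 < (ζ^2).re → 0 < a →
    (ζ^2 * ((a : ℂ) + (b : ℂ) * Complex.I)).im = 0 →
    0 < (ζ^2 * ((a : ℂ) + (b : ℂ) * Complex.I)).re →
    ∀ j : ℕ, ∃ Cj : ℝ, 0 < Cj ∧ ∃ W₀ : ℝ, 0 < W₀ ∧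
    ∀ W : ℝ, W₀ ≤ W →
    ∀ αhr : ℂ, 0 < αhr.re →
      αhr^2 = (W : ℂ)^2 * ζ^2 * ((a : ℂ) + (b : ℂ) * Complex.I)
        + ((a : ℂ) + (b : ℂ) * Complex.I)^2 / 4 →
      |Real.sqrt (ssqHr W a (2*W^2*(ζ^2).re + a) j) / ‖lamHr W ζ a b αhr j‖ - 1|
        ≤ Cj * W ^ (-2 : ℝ) := by
  intro ζ a b hζ hz2 ha him hre j
  set z : ℂ := ζ^2 with hzdef
  set c : ℂ := (a:ℂ) + (b:ℂ) * Complex.I with hcdef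
  set m : ℝ := z.re with hmdef
  set ρ : ℝ := (z * c).re with hρdef
  have hρpos : 0 < ρ := hre
  have hmpos : 0 < m := hz2
  clear_value z c m ρ
  have habsz : ‖z‖ = 1 := by
    rw [hzdef, norm_pow, show ‖ζ‖ = 1 from hζ]; norm_num
  have hnormsq : Complex.normSq z = 1 := by
    rw [Complex.normSq_eq_norm_sq, habsz]; norm_num
  have hzc : z * c = ((ρ:ℝ):ℂ) := by
    apply Complex.ext
    · rw [Complex.ofReal_re, hρdef]
    · rw [Complex.ofReal_im]; exact him
  have hconj1 : (starRingEnd ℂ) z * z = 1 := by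
    rw [mul_comm, Complex.mul_conj, hnormsq]; norm_num
  have hcconj : c = ((ρ:ℝ):ℂ) * (starRingEnd ℂ) z := by
    calc c = ((starRingEnd ℂ) z * z) * c := by rw [hconj1]; ring
      _ = (starRingEnd ℂ) z * (z*c) := by ring
      _ = ((ρ:ℝ):ℂ) * (starRingEnd ℂ) z := by rw [hzc]; ring
  have haρ : a = ρ * m := by
    have := congrArg Complex.re hcconj
    simpa [hcdef, hmdef] using this
  have hbρ : b = -(ρ * z.im) := by
    have := congrArg Complex.im hcconj
    simpa [hcdef] using this
  have him2 : z.im^2 = 1 - m^2 := by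
    have h := hnormsq
    rw [Complex.normSq_apply] at h
    rw [hmdef]; linear_combination h
  have habsc : ‖c‖ = ρ := by
    rw [hcconj, norm_mul, Complex.norm_conj, habsz, Complex.norm_real, Real.norm_eq_abs,
      _root_.abs_of_pos hρpos, mul_one]
  set sρ : ℝ := Real.sqrt ρ with hsρdef
  have hsρpos : 0 < sρ := Real.sqrt_pos.mpr hρpos
  have hsρ2 : sρ^2 = ρ := Real.sq_sqrt hρpos.le
  clear_value sρ
  set bE : ℝ := ρ^2 / (4*sρ) with hbEdef
  have hbEpos : 0 < bE := by rw [hbEdef]; positivity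
  clear_value bE
  set K1 : ℝ := 2*(1+sρ+ρ)*bE + bE^2 with hK1def
  have hK1pos : 0 < K1 := by rw [hK1def]; positivity
  clear_value K1
  set K2 : ℝ := (2*a^2 + (2*a*m+a^2)^2) / (2*m*sρ) with hK2def
  have hK2pos : 0 < K2 := by rw [hK2def]; positivity
  clear_value K2
  set C3 : ℝ := K1 + (2*ρ*m^2 + m*ρ*sρ + ρ^2/4) + 2*a^2 + K2 with hC3def
  have hC3pos : 0 < C3 := by
    have h1 : 0 < 2*ρ*m^2 + m*ρ*sρ + ρ^2/4 := by positivity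
    rw [hC3def]; nlinarith only [hK1pos, hK2pos, h1, sq_nonneg a]
  clear_value C3
  have h2jpos : (0:ℝ) < 2^(2*j+1) := by positivity
  refine ⟨2^(2*j+1) * C3 + 1, by nlinarith only [h2jpos, hC3pos],
    2*C3 + 2, by linarith only [hC3pos], ?_⟩
  intro W hW α hαre hα2
  have hW1 : (1:ℝ) ≤ W := by linarith only [hW, hC3pos]
  have hWpos : (0:ℝ) < W := by linarith only [hW1]
  have hW2C3 : 2*C3 ≤ W^2 := by
    have h := mul_le_mul hW hW (by linarith only [hC3pos]) (by linarith only [hW, hC3pos])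
    nlinarith only [h, hC3pos, sq_nonneg C3]
  have hWsq1 : (1:ℝ) ≤ W^2 := by nlinarith only [hW1]
  have hWW : (0:ℝ) ≤ W^2 - W := by nlinarith only [hW1]
  -- main objects
  set D : ℂ := (W:ℂ)^2 * z + α + c / 2 with hDdef
  set P : ℝ := Complex.normSq D with hPdef
  set A : ℝ := 2*W^2*m + a with hAdef
  set s : ℝ := Real.sqrt ((2*W^4 + a*A) * (a*A)) with hsdef
  set den : ℝ := W^4 + 2*a*A + s with hdendef
  clear_value D P
  -- the error term E = α - W√ρ
  set E : ℂ := α - ((W*sρ : ℝ):ℂ) with hEdef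
  clear_value E
  have hcast : (((W*sρ:ℝ)):ℂ)^2 = (W:ℂ)^2 * ((ρ:ℝ):ℂ) := by
    push_cast
    have h2 : ((sρ:ℝ):ℂ)^2 = ((ρ:ℝ):ℂ) := by exact_mod_cast congrArg Complex.ofReal hsρ2
    linear_combination (W:ℂ)^2 * h2
  have hα2' : α^2 - ((W*sρ:ℝ):ℂ)^2 = c^2/4 := by
    linear_combination hα2 + (W:ℂ)^2 * hzc - hcast
  have hEbound : ‖E‖ ≤ bE / W := by
    have hfac : E * (α + ((W*sρ:ℝ):ℂ)) = c^2/4 := by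
      rw [hEdef]; linear_combination hα2'
    have habs1 : ‖E‖ * ‖(α + ((W*sρ:ℝ):ℂ))‖ = ρ^2/4 := by
      rw [← norm_mul, hfac, norm_div, norm_pow, habsc]
      norm_num
    have habs2 : W * sρ ≤ ‖(α + ((W*sρ:ℝ):ℂ))‖ := by
      have h := Complex.re_le_norm (α + ((W*sρ:ℝ):ℂ))
      rw [Complex.add_re, Complex.ofReal_re] at h
      linarith only [h, hαre]
    have hEnn : 0 ≤ ‖E‖ := norm_nonneg _
    have h3 : ‖E‖ * (W*sρ) ≤ ρ^2/4 := by
      have h4 := mul_le_mul_of_nonneg_left habs2 hEnn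
      linarith only [habs1, h4]
    rw [hbEdef, div_div]
    rw [le_div_iff₀ (by positivity)]
    linarith only [h3]
  -- the principal part D0
  set D0 : ℂ := ((W^2:ℝ):ℂ)*z + ((W*sρ:ℝ):ℂ) + ((a/2:ℝ):ℂ) + ((b/2:ℝ):ℂ)*Complex.I
    with hD0def
  clear_value D0
  have hDE : D = D0 + E := by
    rw [hDdef, hD0def, hEdef, hcdef]; push_cast; ring
  have hre0 : D0.re = W^2*m + W*sρ + a/2 := by
    rw [hD0def]
    simp only [Complex.add_re, Complex.mul_re, Complex.ofReal_re, Complex.ofReal_im,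
      Complex.I_re, Complex.I_im]
    rw [← hmdef]; ring
  have him0 : D0.im = W^2*z.im + b/2 := by
    rw [hD0def]
    simp only [Complex.add_im, Complex.mul_im, Complex.ofReal_re, Complex.ofReal_im,
      Complex.I_re, Complex.I_im]
    ring
  have hP0 : Complex.normSq D0 = W^4 + 2*m*sρ*W^3 + 2*ρ*m^2*W^2 + m*ρ*sρ*W + ρ^2/4 := by
    rw [Complex.normSq_apply, hre0, him0, haρ, hbρ]
    linear_combination W^2 * hsρ2 + (W^2 - ρ/2)^2 * him2
  have hzile : -1 ≤ z.im ∧ z.im ≤ 1 := by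
    constructor <;>
      nlinarith only [him2, sq_nonneg (z.im - 1), sq_nonneg (z.im + 1), sq_nonneg m]
  have habsb2 : |b/2| ≤ ρ/2 := by
    rw [abs_le, hbρ]
    constructor
    · nlinarith only [hzile.2, hρpos]
    · nlinarith only [hzile.1, hρpos]
  have habsD0 : ‖D0‖ ≤ (1+sρ+ρ)*W^2 := by
    have t1 : ‖D0‖ ≤ ‖(((W^2:ℝ):ℂ)*z)‖ + ‖((W*sρ:ℝ):ℂ)‖
        + ‖((a/2:ℝ):ℂ)‖ + ‖(((b/2:ℝ):ℂ)*Complex.I)‖ := by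
      rw [hD0def]
      calc ‖((((W^2:ℝ):ℂ)*z + ((W*sρ:ℝ):ℂ) + ((a/2:ℝ):ℂ)) + ((b/2:ℝ):ℂ)*Complex.I)‖
          ≤ ‖(((W^2:ℝ):ℂ)*z + ((W*sρ:ℝ):ℂ) + ((a/2:ℝ):ℂ))‖
            + ‖(((b/2:ℝ):ℂ)*Complex.I)‖ := norm_add_le _ _
        _ ≤ _ := by
            have t2 : ‖(((W^2:ℝ):ℂ)*z + ((W*sρ:ℝ):ℂ) + ((a/2:ℝ):ℂ))‖
                ≤ ‖(((W^2:ℝ):ℂ)*z)‖ + ‖((W*sρ:ℝ):ℂ)‖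
                  + ‖((a/2:ℝ):ℂ)‖ := by
              calc ‖((((W^2:ℝ):ℂ)*z + ((W*sρ:ℝ):ℂ)) + ((a/2:ℝ):ℂ))‖
                  ≤ ‖(((W^2:ℝ):ℂ)*z + ((W*sρ:ℝ):ℂ))‖
                    + ‖((a/2:ℝ):ℂ)‖ := norm_add_le _ _
                _ ≤ _ := by
                    linarith only [norm_add_le (((W^2:ℝ):ℂ)*z) (((W*sρ:ℝ):ℂ))]
            linarith only [t2]
    have e1 : ‖(((W^2:ℝ):ℂ)*z)‖ = W^2 := by
      rw [norm_mul, habsz, Complex.norm_real, Real.norm_eq_abs, mul_one, _root_.abs_of_nonneg (by positivity)]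
    have e2 : ‖((W*sρ:ℝ):ℂ)‖ = W*sρ := by
      rw [Complex.norm_real, Real.norm_eq_abs, _root_.abs_of_nonneg (by positivity)]
    have e3 : ‖((a/2:ℝ):ℂ)‖ = a/2 := by
      rw [Complex.norm_real, Real.norm_eq_abs, _root_.abs_of_nonneg (by positivity)]
    have e4 : ‖(((b/2:ℝ):ℂ)*Complex.I)‖ = |b/2| := by
      rw [norm_mul, Complex.norm_I, mul_one, Complex.norm_real, Real.norm_eq_abs]
    rw [e1, e2, e3, e4] at t1
    have hmle1 : m ≤ 1 := by nlinarith only [him2, sq_nonneg z.im, hmpos]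
    have ha2 : a/2 ≤ ρ/2 := by nlinarith only [haρ, hρpos, hmle1]
    have g1 : sρ*W ≤ sρ*W^2 := by nlinarith only [mul_nonneg hsρpos.le hWW]
    have g2 : ρ ≤ ρ*W^2 := by
      nlinarith only [mul_nonneg hρpos.le (by linarith only [hWsq1] : (0:ℝ) ≤ W^2 - 1)]
    linarith only [t1, ha2, habsb2, g1, g2]
  have hPP0 : |P - Complex.normSq D0| ≤ K1 * W := by
    have hsplit : P = Complex.normSq D0 + Complex.normSq E + 2*(D0 * (starRingEnd ℂ) E).re := by
      rw [hPdef, hDE, Complex.normSq_add]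
    have h1 : |(D0 * (starRingEnd ℂ) E).re| ≤ ‖D0‖ * ‖E‖ := by
      calc |(D0 * (starRingEnd ℂ) E).re| ≤ ‖(D0 * (starRingEnd ℂ) E)‖ :=
            Complex.abs_re_le_norm _
        _ = ‖D0‖ * ‖E‖ := by rw [norm_mul, Complex.norm_conj]
    have h2 : Complex.normSq E = ‖E‖ ^ 2 := (Complex.sq_norm E).symm
    have hED0 : ‖D0‖ * ‖E‖ ≤ ((1+sρ+ρ)*bE) * W := by
      calc ‖D0‖ * ‖E‖ ≤ ((1+sρ+ρ)*W^2) * (bE/W) :=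
            mul_le_mul habsD0 hEbound (norm_nonneg _) (by positivity)
        _ = ((1+sρ+ρ)*bE) * W := by field_simp
    have hE2 : ‖E‖ ^ 2 ≤ bE^2 * W := by
      have hEb : ‖E‖ ≤ bE := le_trans hEbound (by
        rw [div_le_iff₀ hWpos]
        nlinarith only [mul_nonneg hbEpos.le (by linarith only [hW1] : (0:ℝ) ≤ W - 1)])
      have hsq1 : ‖E‖ ^ 2 ≤ bE^2 := by
        nlinarith only [hEb, norm_nonneg E]
      have hsq2 : bE^2 ≤ bE^2*W := by
        nlinarith only [mul_nonneg (mul_nonneg hbEpos.le hbEpos.le)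
          (by linarith only [hW1] : (0:ℝ) ≤ W - 1)]
      linarith only [hsq1, hsq2]
    have hre1 := (abs_le.mp h1).1
    have hre2 := (abs_le.mp h1).2
    rw [hsplit, hK1def, abs_le]
    constructor
    · linarith only [hED0, hE2, h2, hre1, hre2, sq_nonneg (‖E‖),
        mul_nonneg (sq_nonneg bE) hWpos.le]
    · linarith only [hED0, hE2, h2, hre1, hre2, sq_nonneg (‖E‖),
        mul_nonneg (sq_nonneg bE) hWpos.le]
  -- the sqrt part of den
  have haA : a*A = 2*ρ*m^2*W^2 + a^2 := by
    rw [hAdef]; linear_combination (2*W^2*m)*haρ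
  have haApos : 0 < a*A := by rw [haA]; positivity
  have hX : (2*W^4 + a*A)*(a*A) = (2*m*sρ*W^3)^2 + 2*a^2*W^4 + (a*A)^2 := by
    linear_combination 2*W^4*haA - 4*m^2*W^6*hsρ2
  have hs_lb : 2*m*sρ*W^3 ≤ s := by
    rw [hsdef]
    have h : (2*m*sρ*W^3)^2 ≤ (2*W^4 + a*A)*(a*A) := by
      rw [hX]
      linarith only [sq_nonneg (a*A), sq_nonneg (a*W^2)]
    calc 2*m*sρ*W^3 = Real.sqrt ((2*m*sρ*W^3)^2) := (Real.sqrt_sq (by positivity)).symm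
      _ ≤ _ := Real.sqrt_le_sqrt h
  have hs_ub : s ≤ 2*m*sρ*W^3 + K2*W := by
    rw [hsdef]
    have hK2id : 2*m*sρ*K2 = 2*a^2 + (2*a*m+a^2)^2 := by
      rw [hK2def]; field_simp
    have haAub : a*A ≤ (2*a*m+a^2)*W^2 := by
      rw [hAdef]
      nlinarith only [mul_nonneg (sq_nonneg a) (by linarith only [hWsq1] : (0:ℝ) ≤ W^2 - 1)]
    have hsq : a*A*(a*A) ≤ ((2*a*m+a^2)*W^2)*((2*a*m+a^2)*W^2) :=
      mul_le_mul haAub haAub haApos.le (by positivity)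
    have hK2W : 2*m*sρ*K2*W^4 = (2*a^2 + (2*a*m+a^2)^2)*W^4 := by
      linear_combination W^4 * hK2id
    have h0 : (0:ℝ) ≤ (2*a^2 + (2*a*m+a^2)^2)*W^4 := by positivity
    have h : (2*W^4 + a*A)*(a*A) ≤ (2*m*sρ*W^3 + K2*W)^2 := by
      rw [hX]
      linarith only [hsq, hK2W, sq_nonneg (K2*W), h0]
    calc Real.sqrt ((2*W^4 + a*A)*(a*A)) ≤ Real.sqrt ((2*m*sρ*W^3 + K2*W)^2) :=
          Real.sqrt_le_sqrt h
      _ = 2*m*sρ*W^3 + K2*W := Real.sqrt_sq (by positivity)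
  have hsnn : (0:ℝ) ≤ s := by rw [hsdef]; exact Real.sqrt_nonneg _
  clear_value s den A
  have hdenlb : W^4 ≤ den := by rw [hdendef]; linarith only [haApos, hsnn]
  have hdenpos : 0 < den := lt_of_lt_of_le (by positivity) hdenlb
  -- |P - den| ≤ C3 W²
  have hPden : |P - den| ≤ C3 * W^2 := by
    have f1 : K1*W ≤ K1*W^2 := by nlinarith only [mul_nonneg hK1pos.le hWW]
    have f2 : K2*W ≤ K2*W^2 := by nlinarith only [mul_nonneg hK2pos.le hWW]
    have f3 : m*ρ*sρ*W ≤ m*ρ*sρ*W^2 := by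
      nlinarith only [mul_nonneg (by positivity : (0:ℝ) ≤ m*ρ*sρ) hWW]
    have f4 : ρ^2/4 ≤ ρ^2/4*W^2 := by
      nlinarith only [mul_nonneg (by positivity : (0:ℝ) ≤ ρ^2/4)
        (by linarith only [hWsq1] : (0:ℝ) ≤ W^2 - 1)]
    have f5 : 2*a^2 ≤ 2*a^2*W^2 := by
      nlinarith only [mul_nonneg (by positivity : (0:ℝ) ≤ 2*a^2)
        (by linarith only [hWsq1] : (0:ℝ) ≤ W^2 - 1)]
    have f6 : (0:ℝ) ≤ 2*ρ*m^2*W^2 := by positivity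
    have f7 : (0:ℝ) ≤ K2*W^2 := by positivity
    have f8 : (0:ℝ) ≤ m*ρ*sρ*W := by positivity
    have f9 : (0:ℝ) ≤ K1*W^2 := by positivity
    have f10 : (0:ℝ) ≤ a^2 := sq_nonneg a
    have f12 : (0:ℝ) ≤ ρ^2 := sq_nonneg ρ
    have f13 : (0:ℝ) ≤ m*ρ*sρ*W^2 := by positivity
    have f14 : (0:ℝ) ≤ ρ^2*W^2 := by positivity
    have f15 : (0:ℝ) ≤ 2*a^2*W^2 := by positivity
    have hup := (abs_le.mp hPP0).2
    have hlo := (abs_le.mp hPP0).1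
    rw [hdendef, hC3def, abs_le]
    constructor
    · linarith only [hP0, haA, hs_lb, hs_ub, f1, f2, f3, f4, f5, f6, f7, f8, f9,
        f10, f12, f13, f14, f15, hup, hlo]
    · linarith only [hP0, haA, hs_lb, hs_ub, f1, f2, f3, f4, f5, f6, f7, f8, f9,
        f10, f12, f13, f14, f15, hup, hlo]
  have hPlb : den/2 ≤ P := by
    have h := (abs_le.mp hPden).1
    have h5 : (0:ℝ) ≤ (W^2 - 2*C3)*W^2 := mul_nonneg (by linarith only [hW2C3]) (sq_nonneg W)
    nlinarith only [h, h5, hdenlb]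
  have hPpos : 0 < P := by linarith only [hPlb, hdenpos]
  set q : ℝ := P/den with hqdef
  have hqpos : 0 < q := div_pos hPpos hdenpos
  have hq : |q - 1| ≤ C3/W^2 := by
    rw [hqdef, div_sub_one hdenpos.ne', abs_div, _root_.abs_of_pos hdenpos,
      div_le_div_iff₀ hdenpos (by positivity)]
    have h6 := mul_le_mul_of_nonneg_right hPden (sq_nonneg W)
    have h7 := mul_le_mul_of_nonneg_left hdenlb hC3pos.le
    nlinarith only [h6, h7]
  clear_value q
  have hq12 : |q - 1| ≤ 1/2 := by
    refine le_trans hq ?_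
    rw [div_le_iff₀ (by positivity)]
    linarith only [hW2C3]
  set u : ℝ := q ^ (1/4 : ℝ) with hudef
  have hu0 : 0 ≤ u := by rw [hudef]; positivity
  have hu4 : u^4 = q := by
    rw [hudef, ← Real.rpow_natCast (q ^ (1/4:ℝ)) 4, ← Real.rpow_mul hqpos.le]
    norm_num
  have hu2' : u^2 = Real.sqrt q := by
    rw [hudef, ← Real.rpow_natCast (q ^ (1/4:ℝ)) 2, ← Real.rpow_mul hqpos.le,
      Real.sqrt_eq_rpow]
    norm_num
  clear_value u
  -- norm of lamHr
  have hDne : D ≠ 0 := by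
    intro h
    rw [hPdef, h, Complex.normSq_zero] at hPpos
    exact lt_irrefl _ hPpos
  set d : ℝ := ‖D‖ with hddef2
  have hdpos : 0 < d := by rw [hddef2]; exact norm_pos_iff.mpr hDne
  have hd2 : d^2 = P := by rw [hddef2, hPdef]; exact Complex.sq_norm D
  clear_value d
  have hπDne : ((Real.pi:ℝ):ℂ) / D ≠ 0 :=
    div_ne_zero (by exact_mod_cast Real.pi_ne_zero) hDne
  have hLdef : ‖lamHr W ζ a b α j‖ = (Real.pi/d)^((1:ℝ)/2) * (W^2/d)^j := by
    rw [lamHr, ← hzdef, ← hcdef, ← hDdef]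
    rw [norm_mul, norm_pow, ]
    rw [Complex.norm_cpow_of_ne_zero hπDne]
    have h12re : (1/2 : ℂ).re = 1/2 := by norm_num
    have h12im : (1/2 : ℂ).im = 0 := by norm_num
    rw [h12re, h12im, mul_zero, Real.exp_zero, div_one]
    have e1 : ‖(((Real.pi:ℝ):ℂ) / D)‖ = Real.pi / d := by
      rw [norm_div, Complex.norm_real, Real.norm_eq_abs, _root_.abs_of_pos Real.pi_pos, hddef2]
    have e2 : ‖((W:ℂ)^2 * z / D)‖ = W^2/d := by
      rw [norm_div, norm_mul, norm_pow, Complex.norm_real, Real.norm_eq_abs, habsz, mul_one,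
        _root_.abs_of_pos hWpos, hddef2]
    rw [e1, e2]
  set L : ℝ := ‖lamHr W ζ a b α j‖ with hLsetdef
  have hLpos : 0 < L := by rw [hLdef]; positivity
  clear_value L
  have hL2 : L^2 = Real.pi * W^(4*j) / (d * d^(2*j)) := by
    rw [hLdef, mul_pow]
    have e1 : ((Real.pi/d)^((1:ℝ)/2))^2 = Real.pi/d := by
      rw [← Real.rpow_natCast ((Real.pi/d)^((1:ℝ)/2)) 2, ← Real.rpow_mul (by positivity)]
      norm_num
    rw [e1, ← pow_mul, div_pow, ← pow_mul]
    field_simp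
    all_goals ring
  have hssq : ssqHr W a A j = Real.pi * W^(4*j) / (Real.sqrt den * den^j) := by
    rw [ssqHr, ← hsdef, ← hdendef]
    rw [Real.sqrt_div (by positivity) den, Real.sqrt_sq Real.pi_pos.le, div_pow, ← pow_mul]
    have hsden : (0:ℝ) < Real.sqrt den := Real.sqrt_pos.mpr hdenpos
    field_simp
    all_goals ring
  have hkey : ssqHr W a A j = L^2 * (Real.sqrt q * q^j) := by
    rw [hssq, hL2, hqdef]
    rw [Real.sqrt_div hPpos.le den, div_pow]
    have hsP : Real.sqrt P = d := by rw [← hd2, Real.sqrt_sq hdpos.le]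
    have hPj : P^j = d^(2*j) := by rw [← hd2, ← pow_mul]
    rw [hsP, hPj]
    have hsden : (0:ℝ) < Real.sqrt den := Real.sqrt_pos.mpr hdenpos
    field_simp
    all_goals ring
  have hsqid : Real.sqrt q * q^j = (u^(2*j+1))^2 := by
    calc Real.sqrt q * q^j = Real.sqrt q * ((Real.sqrt q)^2)^j := by
          rw [Real.sq_sqrt hqpos.le]
      _ = (Real.sqrt q)^(2*j+1) := by ring
      _ = (u^2)^(2*j+1) := by rw [hu2']
      _ = (u^(2*j+1))^2 := by ring
  have hratio : Real.sqrt (ssqHr W a A j) / L = u^(2*j+1) := by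
    have h1 : Real.sqrt (ssqHr W a A j) = L * (u^(2*j+1)) := by
      rw [hkey, hsqid, Real.sqrt_mul (sq_nonneg L), Real.sqrt_sq hLpos.le,
        Real.sqrt_sq (by positivity)]
    rw [h1, mul_div_cancel_left₀ _ hLpos.ne']
  rw [hratio]
  -- final estimate
  have hq32 : q ≤ 3/2 := by
    have h := (abs_le.mp hq12).2
    linarith only [h]
  have hu2le : u ≤ 2 := by
    by_contra hcon
    push_neg at hcon
    have h4 : 4 < u^2 := by nlinarith only [sq_nonneg (u - 2), hcon, hu0]
    have h16 : 16 < u^4 := by nlinarith only [sq_nonneg (u^2 - 4), h4]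
    rw [hu4] at h16
    linarith only [h16, hq32]
  have huq : |u - 1| ≤ |q - 1| := by
    have e : q - 1 = (u - 1)*(u^3+u^2+u+1) := by rw [← hu4]; ring
    have hge : (1:ℝ) ≤ u^3+u^2+u+1 := by
      nlinarith only [pow_nonneg hu0 3, pow_nonneg hu0 2, hu0]
    calc |u-1| = |u-1| * 1 := (mul_one _).symm
      _ ≤ |u-1| * (u^3+u^2+u+1) := mul_le_mul_of_nonneg_left hge (abs_nonneg _)
      _ = |q-1| := by
          rw [e, abs_mul, _root_.abs_of_nonneg (by linarith only [hge] : (0:ℝ) ≤ u^3+u^2+u+1)]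
  have hfin1 : |u^(2*j+1) - 1| ≤ (2^(2*j+1) - 1) * |u - 1| :=
    aux_pow_sub_one u hu0 hu2le (2*j+1)
  have hWrpow : W^((-2) : ℝ) = 1/W^2 := by
    rw [show ((-2):ℝ) = -((2:ℕ):ℝ) by norm_num, Real.rpow_neg hWpos.le,
      Real.rpow_natCast, one_div]
  rw [hWrpow]
  have h2j1 : (1:ℝ) ≤ 2^(2*j+1) := by
    calc (1:ℝ) = 1^(2*j+1) := (one_pow _).symm
      _ ≤ 2^(2*j+1) := pow_le_pow_left₀ (by norm_num) (by norm_num) _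
  have hchain : (2^(2*j+1) - 1) * |u - 1| ≤ (2^(2*j+1) - 1) * (C3/W^2) := by
    apply mul_le_mul_of_nonneg_left (le_trans huq hq) (by linarith only [h2j1])
  have hfin2 : (2^(2*j+1) - 1) * (C3/W^2) ≤ (2^(2*j+1) * C3 + 1) * (1/W^2) := by
    rw [div_eq_mul_one_div C3 (W^2), ← mul_assoc]
    apply mul_le_mul_of_nonneg_right _ (by positivity : (0:ℝ) ≤ 1/W^2)
    linarith only [hC3pos]
  linarith only [hfin1, hchain, hfin2]
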